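/- Let u, v : ℝ^N → ℝ be functions with u ≥ 0 and v ≥ 0, let ε > 0 and k ≥ 0, and define φ_ε(x) := max( v(x)/(u(x) + ε) − k, 0 ). Then for all x, y ∈ ℝ^N: (u(x) + ε)(u(y) + ε)(φ_ε(x) − φ_ε(y))² ≤ [ u(y)(v(x) − v(y)) − v(y)(u(x) − u(y)) ](φ_ε(x) − φ_ε(y)) + ε (v(x) − v(y))(φ_ε(x) − φ_ε(y)). -/

import Mathlib

noncomputable section

/-- Euclidean space ℝ^N. -/
abbrev Rn (N : ℕ) := EuclideanSpace ℝ (Fin N)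

lemma pos_part_key (p q : ℝ) :
    (max p 0 - max q 0) ^ 2 ≤ (p - q) * (max p 0 - max q 0) := by
  rcases le_or_gt p 0 with hp | hp <;> rcases le_or_gt q 0 with hq | hq
  · rw [max_eq_right hp, max_eq_right hq]; ring_nf; simp
  · rw [max_eq_right hp, max_eq_left hq.le]; nlinarith
  · rw [max_eq_left hp.le, max_eq_right hq]; nlinarith
  · rw [max_eq_left hp.le, max_eq_left hq.le]; nlinarith

/-- The pointwise inequality satisfied by the truncation
φ_ε = (v/(u+ε) - k)_+ of the quotient of two nonnegative functions. -/
theorem truncation_pointwise_inequality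
    {N : ℕ} (hN : 1 ≤ N) (u v : Rn N → ℝ)
    (hu : ∀ x, 0 ≤ u x) (hv : ∀ x, 0 ≤ v x)
    (ε k : ℝ) (hε : 0 < ε) (hk : 0 ≤ k)
    (φ : Rn N → ℝ) (hφ : ∀ x, φ x = max (v x / (u x + ε) - k) 0) :
    ∀ x y : Rn N,
      (u x + ε) * (u y + ε) * (φ x - φ y) ^ 2 ≤
        (u y * (v x - v y) - v y * (u x - u y)) * (φ x - φ y) +
          ε * (v x - v y) * (φ x - φ y) := by
  intro x y
  set A := u x + ε with hA
  set B := u y + ε with hB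
  have hA0 : 0 < A := by have := hu x; simp only [hA]; linarith
  have hB0 : 0 < B := by have := hu y; simp only [hB]; linarith
  set p := v x / A - k with hp
  set q := v y / B - k with hq
  have hφx : φ x = max p 0 := hφ x
  have hφy : φ y = max q 0 := hφ y
  have key := pos_part_key p q
  have h1 : A * B * (φ x - φ y) ^ 2 ≤ A * B * ((p - q) * (φ x - φ y)) := by
    rw [hφx, hφy]
    exact mul_le_mul_of_nonneg_left key (by positivity)
  have h2 : A * B * (p - q) = B * v x - A * v y := by
    rw [hp, hq]; field_simp
    ring
  calc A * B * (φ x - φ y) ^ 2 ≤ A * B * ((p - q) * (φ x - φ y)) := h1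
    _ = (B * v x - A * v y) * (φ x - φ y) := by rw [← h2]; ring
    _ = (u y * (v x - v y) - v y * (u x - u y)) * (φ x - φ y) +
          ε * (v x - v y) * (φ x - φ y) := by rw [hA, hB]; ring
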